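/- Let A := [[0,1],[0,0]] and B := [[0,0],[X,0]] in Mat₂(ℂ[X]). If N is a ℂ[X]-submodule of ℂ[X]² (column vectors) such that A·v ∈ N and B·v ∈ N for every v ∈ N, then there exists an ideal J of ℂ[X] with N = {(p,q) : p ∈ J, q ∈ J} or N = {(p, X·q) : p ∈ J, q ∈ J}. Likewise, if N is a ℂ[X]-submodule of ℂ[X]² invariant under A' := [[0,X],[0,0]] and B' := [[0,0],[1,0]], then there exists an ideal J of ℂ[X] with N = {(p,q) : p ∈ J, q ∈ J} or N = {(X·p, q) : p ∈ J, q ∈ J}. -/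

import Mathlib

open Polynomial


lemma part1 (N : Submodule (Polynomial ℂ) (Fin 2 → Polynomial ℂ))
    (hA : ∀ v ∈ N, (![v 1, 0] : Fin 2 → Polynomial ℂ) ∈ N)
    (hB : ∀ v ∈ N, (![0, X * v 0] : Fin 2 → Polynomial ℂ) ∈ N) :
    ∃ J : Ideal (Polynomial ℂ),
      (N : Set (Fin 2 → Polynomial ℂ)) = {v | v 0 ∈ J ∧ v 1 ∈ J} ∨
      (N : Set (Fin 2 → Polynomial ℂ)) = {v | v 0 ∈ J ∧ ∃ q ∈ J, v 1 = X * q} := by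
  set J : Ideal (Polynomial ℂ) := N.map (LinearMap.proj 0) with hJdef
  set J1 : Ideal (Polynomial ℂ) := N.map (LinearMap.proj 1) with hJ1def
  have hmem0 : ∀ v ∈ N, v 0 ∈ J := fun v hv => ⟨v, hv, rfl⟩
  have hmem1 : ∀ v ∈ N, v 1 ∈ J1 := fun v hv => ⟨v, hv, rfl⟩
  have hJ1J : J1 ≤ J := by
    rintro q ⟨v, hv, rfl⟩
    exact ⟨![v 1, 0], hA v hv, rfl⟩
  have hXJ : ∀ p ∈ J, (![0, X * p] : Fin 2 → Polynomial ℂ) ∈ N := by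
    rintro p ⟨v, hv, rfl⟩; exact hB v hv
  have hQ0 : ∀ q ∈ J1, (![q, 0] : Fin 2 → Polynomial ℂ) ∈ N := by
    rintro q ⟨v, hv, rfl⟩; exact hA v hv
  obtain ⟨f, hf⟩ := (IsPrincipalIdealRing.principal J)
  rw [Ideal.submodule_span_eq] at hf
  by_cases hf0 : f = 0
  · refine ⟨⊥, Or.inl ?_⟩
    have hJbot : J = ⊥ := by rw [hf, hf0]; simp
    ext v
    simp only [Set.mem_setOf_eq, SetLike.mem_coe, Ideal.mem_bot]
    constructor
    · intro hv
      exact ⟨by simpa [hJbot] using hmem0 v hv,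
        by simpa [hJbot] using hJ1J (hmem1 v hv)⟩
    · rintro ⟨h0, h1⟩
      have : v = 0 := by funext k; fin_cases k <;> simpa
      rw [this]; exact N.zero_mem
  · obtain ⟨g, hg⟩ := (IsPrincipalIdealRing.principal J1)
    rw [Ideal.submodule_span_eq] at hg
    have hgJ : g ∈ J := hJ1J (hg ▸ Ideal.subset_span rfl)
    obtain ⟨h, hh⟩ : f ∣ g := by rwa [hf, Ideal.mem_span_singleton] at hgJ
    have hXfJ1 : X * f ∈ J1 := by
      have hfJ : f ∈ J := hf ▸ Ideal.subset_span rfl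
      exact ⟨![0, X * f], hXJ f hfJ, rfl⟩
    obtain ⟨k, hk⟩ : g ∣ X * f := by rwa [hg, Ideal.mem_span_singleton] at hXfJ1
    have hX : X = h * k := by
      have : f * X = f * (h * k) := by rw [mul_comm f X, hk, hh]; ring
      exact mul_left_cancel₀ hf0 this
    rcases (Polynomial.irreducible_X (R := ℂ)).isUnit_or_isUnit hX with hu | hu
    · -- J1 = J, first case
      have hJ1eq : J1 = J := by
        rw [hg, hh, hf, Ideal.span_singleton_mul_right_unit hu]
      -- ![0, f] ∈ N
      obtain ⟨v, hv, hv1⟩ : ∃ v ∈ N, v 1 = f := by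
        have : f ∈ J1 := hJ1eq ▸ (hf ▸ Ideal.subset_span rfl)
        obtain ⟨v, hv, hv1⟩ := this; exact ⟨v, hv, hv1⟩
      obtain ⟨a, ha⟩ : f ∣ v 0 := by
        have := hmem0 v hv; rwa [hf, Ideal.mem_span_singleton] at this
      have hf0N : (![f, 0] : Fin 2 → Polynomial ℂ) ∈ N := by
        have := hA v hv; rwa [hv1] at this
      have h0fN : (![0, f] : Fin 2 → Polynomial ℂ) ∈ N := by
        have hsub : v - a • ![f, 0] ∈ N := N.sub_mem hv (N.smul_mem a hf0N)
        have heq : v - a • (![f, 0] : Fin 2 → Polynomial ℂ) = ![0, f] := by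
          funext j; fin_cases j <;> simp [ha, hv1, mul_comm]
        rwa [heq] at hsub
      refine ⟨J, Or.inl ?_⟩
      ext w
      simp only [Set.mem_setOf_eq, SetLike.mem_coe]
      constructor
      · intro hw; exact ⟨hmem0 w hw, hJ1eq ▸ hmem1 w hw⟩
      · rintro ⟨h0, h1⟩
        have hw0 : (![w 0, 0] : Fin 2 → Polynomial ℂ) ∈ N := hQ0 _ (hJ1eq ▸ h0)
        obtain ⟨c, hc⟩ : f ∣ w 1 := by rwa [hf, Ideal.mem_span_singleton] at h1
        have hw1 : (![0, w 1] : Fin 2 → Polynomial ℂ) ∈ N := by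
          have := N.smul_mem c h0fN
          have heq : c • (![0, f] : Fin 2 → Polynomial ℂ) = ![0, w 1] := by
            funext j; fin_cases j <;> simp [hc, mul_comm]
          rwa [heq] at this
        have : w = ![w 0, 0] + ![0, w 1] := by funext j; fin_cases j <;> simp
        rw [this]; exact N.add_mem hw0 hw1
    · -- J1 = span {X * f}, second case
      have hJ1eq : J1 = Ideal.span {X * f} := by
        rw [hg, hk, Ideal.span_singleton_mul_right_unit hu]
      refine ⟨J, Or.inr ?_⟩
      ext w
      simp only [Set.mem_setOf_eq, SetLike.mem_coe]
      constructor
      · intro hw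
        refine ⟨hmem0 w hw, ?_⟩
        have := hmem1 w hw
        rw [hJ1eq, Ideal.mem_span_singleton] at this
        obtain ⟨c, hc⟩ := this
        refine ⟨f * c, ?_, by rw [hc]; ring⟩
        rw [hf, Ideal.mem_span_singleton]; exact ⟨c, rfl⟩
      · rintro ⟨h0, q, hq, hw1⟩
        obtain ⟨v, hv, hv0⟩ : ∃ v ∈ N, v 0 = w 0 := by
          obtain ⟨v, hv, hv0⟩ := h0; exact ⟨v, hv, hv0⟩
        obtain ⟨r, hr, hv1⟩ : ∃ r ∈ J, v 1 = X * r := by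
          have := hmem1 v hv
          rw [hJ1eq, Ideal.mem_span_singleton] at this
          obtain ⟨c, hc⟩ := this
          exact ⟨f * c, by rw [hf, Ideal.mem_span_singleton]; exact ⟨c, rfl⟩,
            by rw [hc]; ring⟩
        have hs : (![0, X * (q - r)] : Fin 2 → Polynomial ℂ) ∈ N :=
          hXJ _ (J.sub_mem hq hr)
        have heq : w = v + ![0, X * (q - r)] := by
          funext j; fin_cases j <;> simp [hv0, hv1, hw1] <;> ring
        rw [heq]; exact N.add_mem hv hs


lemma part2 (N : Submodule (Polynomial ℂ) (Fin 2 → Polynomial ℂ))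
    (hA : ∀ v ∈ N, (![X * v 1, 0] : Fin 2 → Polynomial ℂ) ∈ N)
    (hB : ∀ v ∈ N, (![0, v 0] : Fin 2 → Polynomial ℂ) ∈ N) :
    ∃ J : Ideal (Polynomial ℂ),
      (N : Set (Fin 2 → Polynomial ℂ)) = {v | v 0 ∈ J ∧ v 1 ∈ J} ∨
      (N : Set (Fin 2 → Polynomial ℂ)) = {v | (∃ p ∈ J, v 0 = X * p) ∧ v 1 ∈ J} := by
  set J : Ideal (Polynomial ℂ) := N.map (LinearMap.proj 1) with hJdef
  set J1 : Ideal (Polynomial ℂ) := N.map (LinearMap.proj 0) with hJ1def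
  have hmem0 : ∀ v ∈ N, v 1 ∈ J := fun v hv => ⟨v, hv, rfl⟩
  have hmem1 : ∀ v ∈ N, v 0 ∈ J1 := fun v hv => ⟨v, hv, rfl⟩
  have hJ1J : J1 ≤ J := by
    rintro q ⟨v, hv, rfl⟩
    exact ⟨![0, v 0], hB v hv, rfl⟩
  have hXJ : ∀ p ∈ J, (![X * p, 0] : Fin 2 → Polynomial ℂ) ∈ N := by
    rintro p ⟨v, hv, rfl⟩; exact hA v hv
  have hQ0 : ∀ q ∈ J1, (![0, q] : Fin 2 → Polynomial ℂ) ∈ N := by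
    rintro q ⟨v, hv, rfl⟩; exact hB v hv
  obtain ⟨f, hf⟩ := (IsPrincipalIdealRing.principal J)
  rw [Ideal.submodule_span_eq] at hf
  by_cases hf0 : f = 0
  · refine ⟨⊥, Or.inl ?_⟩
    have hJbot : J = ⊥ := by rw [hf, hf0]; simp
    ext v
    simp only [Set.mem_setOf_eq, SetLike.mem_coe, Ideal.mem_bot]
    constructor
    · intro hv
      exact ⟨by simpa [hJbot] using hJ1J (hmem1 v hv),
        by simpa [hJbot] using hmem0 v hv⟩
    · rintro ⟨h0, h1⟩
      have : v = 0 := by funext k; fin_cases k <;> simpa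
      rw [this]; exact N.zero_mem
  · obtain ⟨g, hg⟩ := (IsPrincipalIdealRing.principal J1)
    rw [Ideal.submodule_span_eq] at hg
    have hgJ : g ∈ J := hJ1J (hg ▸ Ideal.subset_span rfl)
    obtain ⟨h, hh⟩ : f ∣ g := by rwa [hf, Ideal.mem_span_singleton] at hgJ
    have hXfJ1 : X * f ∈ J1 := by
      have hfJ : f ∈ J := hf ▸ Ideal.subset_span rfl
      exact ⟨![X * f, 0], hXJ f hfJ, rfl⟩
    obtain ⟨k, hk⟩ : g ∣ X * f := by rwa [hg, Ideal.mem_span_singleton] at hXfJ1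
    have hX : X = h * k := by
      have : f * X = f * (h * k) := by rw [mul_comm f X, hk, hh]; ring
      exact mul_left_cancel₀ hf0 this
    rcases (Polynomial.irreducible_X (R := ℂ)).isUnit_or_isUnit hX with hu | hu
    · -- J1 = J, first case
      have hJ1eq : J1 = J := by
        rw [hg, hh, hf, Ideal.span_singleton_mul_right_unit hu]
      obtain ⟨v, hv, hv1⟩ : ∃ v ∈ N, v 0 = f := by
        have : f ∈ J1 := hJ1eq ▸ (hf ▸ Ideal.subset_span rfl)
        obtain ⟨v, hv, hv1⟩ := this; exact ⟨v, hv, hv1⟩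
      obtain ⟨a, ha⟩ : f ∣ v 1 := by
        have := hmem0 v hv; rwa [hf, Ideal.mem_span_singleton] at this
      have hf0N : (![0, f] : Fin 2 → Polynomial ℂ) ∈ N := by
        have := hB v hv; rwa [hv1] at this
      have h0fN : (![f, 0] : Fin 2 → Polynomial ℂ) ∈ N := by
        have hsub : v - a • ![0, f] ∈ N := N.sub_mem hv (N.smul_mem a hf0N)
        have heq : v - a • (![0, f] : Fin 2 → Polynomial ℂ) = ![f, 0] := by
          funext j; fin_cases j <;> simp [ha, hv1, mul_comm]
        rwa [heq] at hsub
      refine ⟨J, Or.inl ?_⟩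
      ext w
      simp only [Set.mem_setOf_eq, SetLike.mem_coe]
      constructor
      · intro hw; exact ⟨hJ1eq ▸ hmem1 w hw, hmem0 w hw⟩
      · rintro ⟨h0, h1⟩
        have hw0 : (![0, w 1] : Fin 2 → Polynomial ℂ) ∈ N := hQ0 _ (hJ1eq ▸ h1)
        obtain ⟨c, hc⟩ : f ∣ w 0 := by rwa [hf, Ideal.mem_span_singleton] at h0
        have hw1 : (![w 0, 0] : Fin 2 → Polynomial ℂ) ∈ N := by
          have := N.smul_mem c h0fN
          have heq : c • (![f, 0] : Fin 2 → Polynomial ℂ) = ![w 0, 0] := by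
            funext j; fin_cases j <;> simp [hc, mul_comm]
          rwa [heq] at this
        have : w = ![w 0, 0] + ![0, w 1] := by funext j; fin_cases j <;> simp
        rw [this]; exact N.add_mem hw1 hw0
    · -- J1 = span {X * f}, second case
      have hJ1eq : J1 = Ideal.span {X * f} := by
        rw [hg, hk, Ideal.span_singleton_mul_right_unit hu]
      refine ⟨J, Or.inr ?_⟩
      ext w
      simp only [Set.mem_setOf_eq, SetLike.mem_coe]
      constructor
      · intro hw
        refine ⟨?_, hmem0 w hw⟩
        have := hmem1 w hw
        rw [hJ1eq, Ideal.mem_span_singleton] at this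
        obtain ⟨c, hc⟩ := this
        refine ⟨f * c, ?_, by rw [hc]; ring⟩
        rw [hf, Ideal.mem_span_singleton]; exact ⟨c, rfl⟩
      · rintro ⟨⟨q, hq, hw1⟩, h1⟩
        obtain ⟨v, hv, hv0⟩ : ∃ v ∈ N, v 1 = w 1 := by
          obtain ⟨v, hv, hv0⟩ := h1; exact ⟨v, hv, hv0⟩
        obtain ⟨r, hr, hv1⟩ : ∃ r ∈ J, v 0 = X * r := by
          have := hmem1 v hv
          rw [hJ1eq, Ideal.mem_span_singleton] at this
          obtain ⟨c, hc⟩ := this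
          exact ⟨f * c, by rw [hf, Ideal.mem_span_singleton]; exact ⟨c, rfl⟩,
            by rw [hc]; ring⟩
        have hs : (![X * (q - r), 0] : Fin 2 → Polynomial ℂ) ∈ N :=
          hXJ _ (J.sub_mem hq hr)
        have heq : w = v + ![X * (q - r), 0] := by
          funext j; fin_cases j <;> simp [hv0, hv1, hw1] <;> ring
        rw [heq]; exact N.add_mem hv hs

lemma mulA (v : Fin 2 → Polynomial ℂ) :
    (!![0,1;0,0] : Matrix (Fin 2) (Fin 2) (Polynomial ℂ)).mulVec v = ![v 1, 0] := by
  funext k; fin_cases k <;> simp [Matrix.mulVec, dotProduct, Fin.sum_univ_two, Matrix.vecHead, Matrix.vecTail]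

lemma mulB (v : Fin 2 → Polynomial ℂ) :
    (!![0,0;X,0] : Matrix (Fin 2) (Fin 2) (Polynomial ℂ)).mulVec v = ![0, X * v 0] := by
  funext k; fin_cases k <;> simp [Matrix.mulVec, dotProduct, Fin.sum_univ_two, Matrix.vecHead, Matrix.vecTail]

lemma mulA' (v : Fin 2 → Polynomial ℂ) :
    (!![0,X;0,0] : Matrix (Fin 2) (Fin 2) (Polynomial ℂ)).mulVec v = ![X * v 1, 0] := by
  funext k; fin_cases k <;> simp [Matrix.mulVec, dotProduct, Fin.sum_univ_two, Matrix.vecHead, Matrix.vecTail]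

lemma mulB' (v : Fin 2 → Polynomial ℂ) :
    (!![0,0;1,0] : Matrix (Fin 2) (Fin 2) (Polynomial ℂ)).mulVec v = ![0, v 0] := by
  funext k; fin_cases k <;> simp [Matrix.mulVec, dotProduct, Fin.sum_univ_two, Matrix.vecHead, Matrix.vecTail]

/-- Submodules of `ℂ[X]²` invariant under `A = [[0,1],[0,0]]` and `B = [[0,0],[X,0]]` are of the
form `J ⊕ J` or `J ⊕ XJ` for an ideal `J ⊆ ℂ[X]`; likewise, submodules invariant under
`A' = [[0,X],[0,0]]` and `B' = [[0,0],[1,0]]` are of the form `J ⊕ J` or `XJ ⊕ J`. -/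
theorem stmt_4 :
    (∀ N : Submodule (Polynomial ℂ) (Fin 2 → Polynomial ℂ),
      (∀ v ∈ N, (!![0, 1; 0, 0] : Matrix (Fin 2) (Fin 2) (Polynomial ℂ)).mulVec v ∈ N) →
      (∀ v ∈ N, (!![0, 0; X, 0] : Matrix (Fin 2) (Fin 2) (Polynomial ℂ)).mulVec v ∈ N) →
      ∃ J : Ideal (Polynomial ℂ),
        (N : Set (Fin 2 → Polynomial ℂ)) = {v | v 0 ∈ J ∧ v 1 ∈ J} ∨
        (N : Set (Fin 2 → Polynomial ℂ)) = {v | v 0 ∈ J ∧ ∃ q ∈ J, v 1 = X * q}) ∧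
    (∀ N : Submodule (Polynomial ℂ) (Fin 2 → Polynomial ℂ),
      (∀ v ∈ N, (!![0, X; 0, 0] : Matrix (Fin 2) (Fin 2) (Polynomial ℂ)).mulVec v ∈ N) →
      (∀ v ∈ N, (!![0, 0; 1, 0] : Matrix (Fin 2) (Fin 2) (Polynomial ℂ)).mulVec v ∈ N) →
      ∃ J : Ideal (Polynomial ℂ),
        (N : Set (Fin 2 → Polynomial ℂ)) = {v | v 0 ∈ J ∧ v 1 ∈ J} ∨
        (N : Set (Fin 2 → Polynomial ℂ)) = {v | (∃ p ∈ J, v 0 = X * p) ∧ v 1 ∈ J}) := by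
  constructor
  · intro N hA hB
    exact part1 N (fun v hv => by have := hA v hv; rwa [mulA] at this)
      (fun v hv => by have := hB v hv; rwa [mulB] at this)
  · intro N hA hB
    exact part2 N (fun v hv => by have := hA v hv; rwa [mulA'] at this)
      (fun v hv => by have := hB v hv; rwa [mulB'] at this)
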